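/- Let 1 < p < ∞ and let x = (x_n) ∈ ⊕_p X_n have x_n = 0 for all n ≠ n_0 with x_{n_0} ≠ 0. Then for any y = (y_n) ∈ ⊕_p X_n: x ⊥_B y if and only if x_{n_0} ⊥_B y_{n_0}, and y ⊥_B x if and only if y_{n_0} ⊥_B x_{n_0}. -/

import Mathlib

open scoped ENNReal

/-- Birkhoff-James orthogonality: `u ⊥_B v` iff `‖u + c • v‖ ≥ ‖u‖` for every scalar. -/
def BJOrth {X : Type*} [NormedAddCommGroup X] [NormedSpace ℝ X] (u v : X) : Prop :=
  ∀ c : ℝ, ‖u‖ ≤ ‖u + c • v‖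

private lemma key_aux (p a δ M : ℝ) (hp : 1 < p) (ha : 0 < a) (hδ : 0 < δ) (hM : 0 ≤ M) :
    ∃ t : ℝ, 0 < t ∧ t ≤ 1 ∧ (a - t * δ) ^ p + t ^ p * M < a ^ p := by
  set φ : ℝ → ℝ := fun t => a ^ p - ((a - t * δ) ^ p + t ^ p * M) with hφ
  have hinner : HasDerivAt (fun t : ℝ => a - t * δ) (-δ) 0 := by
    simpa using (((hasDerivAt_id (0 : ℝ)).mul_const δ).const_sub a)
  have houter : HasDerivAt (fun s : ℝ => s ^ p) (p * a ^ (p - 1)) ((fun t : ℝ => a - t * δ) 0) := by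
    simpa using Real.hasDerivAt_rpow_const (x := a) (p := p) (Or.inl ha.ne')
  have hd1 : HasDerivAt (fun t : ℝ => (a - t * δ) ^ p) ((p * a ^ (p - 1)) * (-δ)) 0 :=
    houter.comp (h := fun t : ℝ => a - t * δ) 0 hinner
  have hd2 : HasDerivAt (fun t : ℝ => t ^ p * M) ((p * (0 : ℝ) ^ (p - 1)) * M) 0 :=
    (Real.hasDerivAt_rpow_const (x := (0 : ℝ)) (p := p) (Or.inr hp.le)).mul_const M
  have hz : (0 : ℝ) ^ (p - 1) = 0 := Real.zero_rpow (by linarith)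
  have hdφ : HasDerivAt φ (p * a ^ (p - 1) * δ) 0 := by
    have := (hd1.add hd2).const_sub (a ^ p)
    rw [hz] at this
    have e : p * a ^ (p - 1) * δ = -(p * a ^ (p - 1) * -δ + p * 0 * M) := by ring
    rw [e]
    exact this
  have hL : 0 < p * a ^ (p - 1) * δ := by positivity
  have hslope := hasDerivAt_iff_tendsto_slope.mp hdφ
  have hslope' : Filter.Tendsto (slope φ 0) (nhdsWithin 0 (Set.Ioi 0))
      (nhds (p * a ^ (p - 1) * δ)) :=
    hslope.mono_left (nhdsWithin_mono 0 (fun s hs => ne_of_gt hs))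
  have h1 : ∀ᶠ t in nhdsWithin 0 (Set.Ioi 0), 0 < slope φ 0 t :=
    hslope'.eventually (eventually_gt_nhds hL)
  have h2 : ∀ᶠ t in nhdsWithin 0 (Set.Ioi 0), t ∈ Set.Ioc (0 : ℝ) 1 :=
    Ioc_mem_nhdsGT one_pos
  obtain ⟨t, hst, ht⟩ := (h1.and h2).exists
  refine ⟨t, ht.1, ht.2, ?_⟩
  have hφ0 : φ 0 = 0 := by
    simp [hφ, Real.zero_rpow (by linarith : p ≠ 0)]
  have hslope_eq : slope φ 0 t = φ t / t := by
    simp [slope_def_field, hφ0]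
  rw [hslope_eq] at hst
  have hφt : 0 < φ t := by
    have := mul_pos hst ht.1
    rwa [div_mul_cancel₀ _ ht.1.ne'] at this
  simp only [hφ] at hφt
  linarith

/-- For 1 < p < ∞, if `x ∈ ⊕_p E_n` is supported on the single coordinate `n₀` (with
`x_{n₀} ≠ 0`), then for any `y`: `x ⊥_B y` iff `x_{n₀} ⊥_B y_{n₀}`, and `y ⊥_B x` iff
`y_{n₀} ⊥_B x_{n₀}`. -/
theorem stmt17 (E : ℕ → Type*) [∀ n, NormedAddCommGroup (E n)]
    [∀ n, NormedSpace ℝ (E n)]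
    (p : ℝ) (hp : 1 < p) [Fact (1 ≤ ENNReal.ofReal p)]
    (x : lp E (ENNReal.ofReal p)) (n₀ : ℕ)
    (hsupp : ∀ n, n ≠ n₀ → x n = 0) (hne : x n₀ ≠ 0)
    (y : lp E (ENNReal.ofReal p)) :
    (BJOrth x y ↔ BJOrth (x n₀) (y n₀)) ∧
    (BJOrth y x ↔ BJOrth (y n₀) (x n₀)) := by
  have hp0 : (0 : ℝ) < p := one_pos.trans hp
  have hq : (ENNReal.ofReal p).toReal = p := ENNReal.toReal_ofReal hp0.le
  have hqt : 0 < (ENNReal.ofReal p).toReal := by rw [hq]; exact hp0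
  have hq0 : (ENNReal.ofReal p) ≠ 0 := by
    simp [ENNReal.ofReal_eq_zero]; linarith
  -- splitting of the p-th power of the norm
  have split : ∀ f : lp E (ENNReal.ofReal p),
      ‖f‖ ^ p = ‖f n₀‖ ^ p + ∑' n, if n = n₀ then 0 else ‖f n‖ ^ p := by
    intro f
    have hs : Summable fun n => ‖f n‖ ^ p := by
      have := (lp.memℓp f).summable hqt
      rwa [hq] at this
    have h := lp.norm_rpow_eq_tsum hqt f
    rw [hq] at h
    rw [h, hs.tsum_eq_add_tsum_ite n₀]
  -- comparison lemma for vectors agreeing off n₀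
  have cmp : ∀ f g : lp E (ENNReal.ofReal p), (∀ n, n ≠ n₀ → f n = g n) →
      (‖f‖ ≤ ‖g‖ ↔ ‖f n₀‖ ≤ ‖g n₀‖) := by
    intro f g hfg
    rw [← Real.rpow_le_rpow_iff (norm_nonneg f) (norm_nonneg g) hp0,
      ← Real.rpow_le_rpow_iff (norm_nonneg (f n₀)) (norm_nonneg (g n₀)) hp0]
    have htail : (∑' n, if n = n₀ then 0 else ‖f n‖ ^ p)
        = ∑' n, if n = n₀ then 0 else ‖g n‖ ^ p := by
      refine tsum_congr fun n => ?_
      by_cases h : n = n₀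
      · simp [h]
      · simp [h, hfg n h]
    rw [split f, split g, htail, add_le_add_iff_right]
  have hxnorm : ‖x‖ ^ p = ‖x n₀‖ ^ p := by
    rw [split x]
    have : (∑' n, if n = n₀ then 0 else ‖x n‖ ^ p) = 0 := by
      have : ∀ n, (if n = n₀ then 0 else ‖x n‖ ^ p) = 0 := by
        intro n
        by_cases h : n = n₀
        · simp [h]
        · simp [h, hsupp n h, Real.zero_rpow hp0.ne']
      rw [tsum_congr this, tsum_zero]
    rw [this, add_zero]
  have hxeq : ‖x‖ = ‖x n₀‖ :=
    le_antisymm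
      ((Real.rpow_le_rpow_iff (norm_nonneg _) (norm_nonneg _) hp0).mp hxnorm.le)
      (lp.norm_apply_le_norm hq0 x n₀)
  constructor
  · constructor
    · -- hard direction
      intro hB c
      by_contra hlt
      push_neg at hlt
      set a := ‖x n₀‖ with ha_def
      set b := ‖x n₀ + c • y n₀‖ with hb_def
      have ha : 0 < a := norm_pos_iff.mpr hne
      set δ := a - b with hδ_def
      have hδ : 0 < δ := sub_pos.mpr hlt
      set T := ∑' n, if n = n₀ then 0 else ‖y n‖ ^ p with hT_def
      have hT : 0 ≤ T := tsum_nonneg fun n => by positivity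
      obtain ⟨t, ht0, ht1, hkey⟩ :=
        key_aux p a δ (|c| ^ p * T) hp ha hδ (by positivity)
      have hcoordeq : (x + (t * c) • y) n₀ = x n₀ + (t * c) • y n₀ := by
        rfl
      have hcoord : ‖x n₀ + (t * c) • y n₀‖ ≤ a - t * δ := by
        have hdecomp : x n₀ + (t * c) • y n₀
            = (1 - t) • x n₀ + t • (x n₀ + c • y n₀) := by
          rw [smul_add, smul_smul, sub_smul, one_smul]
          abel
        rw [hdecomp]
        calc ‖(1 - t) • x n₀ + t • (x n₀ + c • y n₀)‖
            ≤ ‖(1 - t) • x n₀‖ + ‖t • (x n₀ + c • y n₀)‖ := norm_add_le _ _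
          _ = (1 - t) * a + t * b := by
              rw [norm_smul, norm_smul, Real.norm_eq_abs, Real.norm_eq_abs,
                abs_of_nonneg (by linarith : (0:ℝ) ≤ 1 - t), abs_of_pos ht0]
          _ = a - t * δ := by rw [hδ_def]; ring
      have htail : (∑' n, if n = n₀ then 0 else ‖(x + (t * c) • y) n‖ ^ p)
          = t ^ p * (|c| ^ p * T) := by
        have hterm : ∀ n, (if n = n₀ then 0 else ‖(x + (t * c) • y) n‖ ^ p)
            = (t ^ p * |c| ^ p) * (if n = n₀ then 0 else ‖y n‖ ^ p) := by
          intro n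
          by_cases h : n = n₀
          · simp [h]
          · have hxn : x n = 0 := hsupp n h
            have happ : (x + (t * c) • y) n = (t * c) • y n := by
              show x n + (t * c) • y n = _
              simp [hxn]
            rw [if_neg h, if_neg h, happ, norm_smul, Real.norm_eq_abs,
              Real.mul_rpow (abs_nonneg _) (norm_nonneg _), abs_mul,
              abs_of_pos ht0, Real.mul_rpow ht0.le (abs_nonneg c)]
          
        rw [tsum_congr hterm, tsum_mul_left, hT_def]
        ring
      have hlt2 : ‖x + (t * c) • y‖ ^ p < ‖x‖ ^ p := by
        rw [split (x + (t * c) • y), hxnorm, htail]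
        have h1 : ‖(x + (t * c) • y) n₀‖ ^ p ≤ (a - t * δ) ^ p := by
          rw [hcoordeq]
          exact Real.rpow_le_rpow (norm_nonneg _) hcoord hp0.le
        have : t ^ p * (|c| ^ p * T) = t ^ p * |c| ^ p * T := by ring
        calc ‖(x + (t * c) • y) n₀‖ ^ p + t ^ p * (|c| ^ p * T)
            ≤ (a - t * δ) ^ p + t ^ p * (|c| ^ p * T) := by linarith
          _ < a ^ p := hkey
      have hge := hB (t * c)
      have := Real.rpow_le_rpow (norm_nonneg x) hge hp0.le
      linarith
    · -- easy direction
      intro hB c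
      calc ‖x‖ = ‖x n₀‖ := hxeq
        _ ≤ ‖x n₀ + c • y n₀‖ := hB c
        _ = ‖(x + c • y) n₀‖ := rfl
        _ ≤ ‖x + c • y‖ := lp.norm_apply_le_norm hq0 (x + c • y) n₀
  · -- second statement
    unfold BJOrth
    refine forall_congr' fun c => ?_
    have h := cmp y (y + c • x) (fun n hn => by show _ = y n + c • x n; simp [hsupp n hn])
    rw [h]
    have h2 : (y + c • x) n₀ = y n₀ + c • x n₀ := rfl
    rw [h2]
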